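/- For all integers n ≥ 3 and k ≥ 1, the Lucas–Coxeter–Fuss–Catalan analogue for the Coxeter group D_n, namely ({2k(n-1)+n}/{n}) · Π_{i=1}^{n-1} {2k(n-1)+2i}/{2i} = ({(2k+1)n-2k}/{n}) · {(k+1)(n-1):2 choose n-1:2}_L, is a polynomial in s and t all of whose coefficients are nonnegative integers. -/
import Mathlib


open MvPolynomial Finset

noncomputable section

/-- Polynomial ring ℤ[s,t] with s = X 0, t = X 1. -/
abbrev P2 : Type := MvPolynomial (Fin 2) ℤ

def ps : P2 := X 0
def pt : P2 := X 1

/-- The Lucas sequence of polynomials: {0}=0, {1}=1, {n}=s{n-1}+t{n-2}. -/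
def lucas : ℕ → P2
  | 0 => 0
  | 1 => 1
  | (n+2) => ps * lucas (n+1) + pt * lucas n

/-- The Lucastorial {n}! = {1}{2}⋯{n}. -/
def lucasFact (n : ℕ) : P2 := ∏ i ∈ Finset.range n, lucas (i+1)

/-- The d-divisible Lucastorial {n:d}! = {d}{2d}⋯{nd}. -/
def lucasFactD (d n : ℕ) : P2 := ∏ i ∈ Finset.range n, lucas (d*(i+1))

/-- A polynomial lies in ℕ[s,t]: all coefficients are nonnegative. -/
def Nonneg (p : P2) : Prop := ∀ m, 0 ≤ p.coeff m

/-- The fraction field ℤ(s,t). -/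
abbrev K : Type := FractionRing P2

def φ : P2 →+* K := algebraMap P2 K

def L (n : ℕ) : K := φ (lucas n)

def LFact (n : ℕ) : K := φ (lucasFact n)

def LFactD (d n : ℕ) : K := φ (lucasFactD d n)

/-- The Lucasnomial {n choose k}, as an element of the fraction field. -/
def lnom (n k : ℕ) : K := LFact n / (LFact k * LFact (n-k))

/-- The d-divisible Lucasnomial {n:d choose k:d}, as an element of the fraction field. -/
def lnomD (d n k : ℕ) : K := LFactD d n / (LFactD d k * LFactD d (n-k))

/-- The Lucas-Catalan number C_{n} = (1/{n+1}) {2n choose n}. -/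
def catL (n : ℕ) : K := lnom (2*n) n / L (n+1)

/-- The Lucas-Fuss-Catalan number C_{n,k} = (1/{kn+1}) {(k+1)n choose n}. -/
def fussCatL (n k : ℕ) : K := lnom ((k+1)*n) n / L (k*n+1)

lemma lucas_zero : lucas 0 = 0 := rfl
lemma lucas_one : lucas 1 = 1 := rfl
lemma lucas_ss (n : ℕ) : lucas (n+2) = ps * lucas (n+1) + pt * lucas n := rfl

lemma lucas_two : lucas 2 = ps := by
  rw [show (2:ℕ) = 0 + 2 from rfl, lucas_ss, lucas_one, lucas_zero]; ring

lemma lucas_addf : ∀ a b, lucas (a+b+1) = lucas (a+1) * lucas (b+1) + pt * lucas a * lucas b := by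
  intro a
  induction a using Nat.twoStepInduction with
  | zero => intro b; simp [lucas_zero, lucas_one]
  | one =>
    intro b
    have h : 1 + b + 1 = b + 2 := by omega
    have h2 : 1 + b = b + 1 := by omega
    rw [h, lucas_ss, show lucas (1+1) = ps from lucas_two, lucas_one]
    ring
  | more a ih1 ih2 =>
    intro b
    have e1 := lucas_ss (a+b+1)
    have e2 := ih2 b
    have e3 := ih1 b
    have e4 := lucas_ss (a+1)
    have e5 := lucas_ss a
    simp only [show a+1+b+1 = a+b+1+1 from by omega, show a+1+1 = a+2 from by omega,
      show a+2+b+1 = a+b+1+2 from by omega, show a+2+1 = a+1+2 from by omega] at *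
    linear_combination e1 + ps*e2 + pt*e3 - lucas (b+1)*e4 - pt*lucas b*e5

-- Nonneg closure
lemma nn_add {p q : P2} (hp : Nonneg p) (hq : Nonneg q) : Nonneg (p+q) := by
  intro m; rw [coeff_add]; exact add_nonneg (hp m) (hq m)
lemma nn_mul {p q : P2} (hp : Nonneg p) (hq : Nonneg q) : Nonneg (p*q) := by
  intro m; rw [coeff_mul]
  exact Finset.sum_nonneg fun x _ => mul_nonneg (hp x.1) (hq x.2)
lemma nn_zero : Nonneg (0 : P2) := by intro m; simp
lemma nn_one : Nonneg (1 : P2) := by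
  intro m; rw [coeff_one]; split <;> norm_num
lemma nn_X (i : Fin 2) : Nonneg (X i : P2) := by
  intro m; rw [coeff_X']; split <;> norm_num
lemma nn_ps : Nonneg ps := nn_X 0
lemma nn_pt : Nonneg pt := nn_X 1
lemma nn_lucas : ∀ n, Nonneg (lucas n) := by
  intro n
  induction n using Nat.twoStepInduction with
  | zero => exact nn_zero
  | one => exact nn_one
  | more a ih1 ih2 =>
      rw [lucas_ss]
      exact nn_add (nn_mul nn_ps ih2) (nn_mul nn_pt ih1)

/-- `lb a b` is the 2-divisible lucasnomial with parts a, b: {a+b:2 choose a:2}, as a polynomial. -/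
def lb : ℕ → ℕ → P2
  | 0, _ => 1
  | _+1, 0 => 1
  | (a+1), (b+1) => lucas (2*b+3) * lb a (b+1) + pt * lucas (2*a+1) * lb (a+1) b

lemma lb_zero (b : ℕ) : lb 0 b = 1 := by simp [lb]
lemma lb_zero' (a : ℕ) : lb (a+1) 0 = 1 := by simp [lb]
lemma lb_ss (a b : ℕ) : lb (a+1) (b+1) = lucas (2*b+3) * lb a (b+1) + pt * lucas (2*a+1) * lb (a+1) b := by
  simp [lb]

lemma nn_lb : ∀ a b, Nonneg (lb a b) := by
  intro a
  induction a with
  | zero => intro b; rw [lb_zero]; exact nn_one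
  | succ a iha =>
    intro b
    induction b with
    | zero => rw [lb_zero']; exact nn_one
    | succ b ihb =>
      rw [lb_ss]
      exact nn_add (nn_mul (nn_lucas _) (iha _)) (nn_mul (nn_mul nn_pt (nn_lucas _)) ihb)

lemma factD_succ (a : ℕ) : lucasFactD 2 (a+1) = lucasFactD 2 a * lucas (2*(a+1)) := by
  rw [lucasFactD, lucasFactD, Finset.prod_range_succ]

lemma lb_spec : ∀ a b, lb a b * lucasFactD 2 a * lucasFactD 2 b = lucasFactD 2 (a+b) := by
  intro a
  induction a with
  | zero => intro b; simp [lb_zero, lucasFactD]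
  | succ a iha =>
    intro b
    induction b with
    | zero => simp [lb_zero', lucasFactD]
    | succ b ihb =>
      have e1 := iha (b+1)
      have e2 := ihb
      have e3 := lucas_addf (2*b+2) (2*a+1)
      -- {2b+3}{2a+2} + t{2b+2}{2a+1} = {2a+2b+4}
      rw [lb_ss]
      have h1 : a + 1 + (b+1) = a + b + 1 + 1 := by omega
      rw [h1, factD_succ (a+b+1), factD_succ a, factD_succ b]
      rw [factD_succ b] at e1
      rw [factD_succ a] at e2
      have h2 : 2*b+2+(2*a+1)+1 = 2*(a+b+1+1) := by omega
      rw [h2] at e3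
      have h3 : 2*b+2+1 = 2*b+3 := by omega
      have h4 : 2*a+1+1 = 2*(a+1) := by omega
      rw [h3, h4] at e3
      have h5 : a + (b+1) = a + b + 1 := by omega
      rw [h5] at e1
      have h6 : a + 1 + b = a + b + 1 := by omega
      rw [h6] at e2
      calc (lucas (2*b+3) * lb a (b+1) + pt * lucas (2*a+1) * lb (a+1) b) *
            (lucasFactD 2 a * lucas (2*(a+1))) * (lucasFactD 2 b * lucas (2*(b+1)))
          = (lucas (2*b+3) * lucas (2*(a+1))) * (lb a (b+1) * lucasFactD 2 a * (lucasFactD 2 b * lucas (2*(b+1))))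
            + (pt * lucas (2*a+1) * lucas (2*(b+1))) * (lb (a+1) b * (lucasFactD 2 a * lucas (2*(a+1))) * lucasFactD 2 b) := by ring
        _ = (lucas (2*b+3) * lucas (2*(a+1))) * lucasFactD 2 (a+b+1)
            + (pt * lucas (2*a+1) * lucas (2*(b+1))) * lucasFactD 2 (a+b+1) := by rw [e1, e2]
        _ = (lucas (2*b+3) * lucas (2*(a+1)) + pt * lucas (2*b+2) * lucas (2*a+1)) * lucasFactD 2 (a+b+1) := by ring
        _ = lucas (2*(a+b+1+1)) * lucasFactD 2 (a+b+1) := by rw [← e3]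
        _ = lucasFactD 2 (a+b+1) * lucas (2*(a+b+1+1)) := by ring

lemma ev_lucas_pos : ∀ n, 0 < eval (fun _ => (1:ℤ)) (lucas (n+1)) := by
  intro n
  induction n using Nat.twoStepInduction with
  | zero => simp [lucas_one]
  | one => simp [lucas_two, ps]
  | more a ih1 ih2 =>
    rw [lucas_ss]
    simp only [map_add, map_mul, ps, pt, eval_X]
    nlinarith
lemma lucas_ne_zero (n : ℕ) : lucas (n+1) ≠ 0 := by
  intro h
  have := ev_lucas_pos n
  rw [h] at this; simp at this
lemma factD_ne_zero (n : ℕ) : lucasFactD 2 n ≠ 0 := by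
  rw [lucasFactD]
  apply Finset.prod_ne_zero_iff.mpr
  intro i _
  have : 2*(i+1) = (2*i+1)+1 := by omega
  rw [this]; exact lucas_ne_zero _

lemma φ_inj : Function.Injective φ := IsFractionRing.injective P2 K
lemma φ_ne_zero {x : P2} (hx : x ≠ 0) : φ x ≠ 0 := fun h => hx (φ_inj (by simpa using h))

lemma prod_Icc_eq (f : ℕ → K) (m : ℕ) : ∏ i ∈ Finset.Icc 1 m, f i = ∏ i ∈ Finset.range m, f (i+1) := by
  induction m with
  | zero => simp
  | succ m ih => rw [Finset.prod_Icc_succ_top (by omega), ih, Finset.prod_range_succ]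

lemma factD_add (a b : ℕ) : lucasFactD 2 (a+b) = lucasFactD 2 a * ∏ i ∈ Finset.range b, lucas (2*(a+i+1)) := by
  rw [lucasFactD, lucasFactD, Finset.prod_range_add]

lemma master (m j : ℕ) :
    lucas (2*j+m+3) * lucasFactD 2 (m+j+1) =
      (lucas (2*j+3) * lb m (j+1) + pt * lucas m * (lucas (m+2) + pt * lucas m) * lb (m+1) j) *
        (lucas (m+1) * (lucasFactD 2 m * lucasFactD 2 (j+1))) := by
  have e1 := lb_spec m (j+1)
  rw [show m+(j+1) = m+j+1 from by omega] at e1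
  have e2 := lb_spec (m+1) j
  rw [show m+1+j = m+j+1 from by omega] at e2
  have e3 := lucas_addf (2*j+2) m
  rw [show 2*j+2+m+1 = 2*j+m+3 from by omega, show 2*j+2+1 = 2*j+3 from by omega] at e3
  have e4 := lucas_addf (m+1) m
  rw [show m+1+m+1 = 2*m+2 from by omega, show m+1+1 = m+2 from by omega] at e4
  have e5 := factD_succ m
  rw [show 2*(m+1) = 2*m+2 from by omega] at e5
  have e6 := factD_succ j
  rw [show 2*(j+1) = 2*j+2 from by omega] at e6
  calc lucas (2*j+m+3) * lucasFactD 2 (m+j+1)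
      = (lucas (2*j+3) * lucas (m+1) + pt * lucas (2*j+2) * lucas m) * lucasFactD 2 (m+j+1) := by
        rw [← e3]
    _ = lucas (2*j+3) * lucas (m+1) * lucasFactD 2 (m+j+1)
        + pt * lucas m * lucas (2*j+2) * lucasFactD 2 (m+j+1) := by ring
    _ = lucas (2*j+3) * lucas (m+1) * lucasFactD 2 (m+j+1)
        + pt * lucas m * lucas (2*j+2) * (lb (m+1) j * lucasFactD 2 (m+1) * lucasFactD 2 j) := by
        rw [e2]
    _ = lucas (2*j+3) * lucas (m+1) * lucasFactD 2 (m+j+1)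
        + pt * lucas m * lucas (2*j+2) * (lb (m+1) j * (lucasFactD 2 m * lucas (2*m+2)) * lucasFactD 2 j) := by
        rw [← e5]
    _ = lucas (2*j+3) * lucas (m+1) * (lb m (j+1) * lucasFactD 2 m * lucasFactD 2 (j+1))
        + pt * lucas m * lucas (2*m+2) * (lb (m+1) j * lucasFactD 2 m * (lucasFactD 2 j * lucas (2*j+2))) := by
        rw [e1]; ring
    _ = lucas (2*j+3) * lucas (m+1) * (lb m (j+1) * lucasFactD 2 m * lucasFactD 2 (j+1))
        + pt * lucas m * (lucas (m+2) * lucas (m+1) + pt * lucas (m+1) * lucas m) *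
            (lb (m+1) j * lucasFactD 2 m * lucasFactD 2 (j+1)) := by
        rw [← e6, ← e4]
    _ = (lucas (2*j+3) * lb m (j+1) + pt * lucas m * (lucas (m+2) + pt * lucas m) * lb (m+1) j) *
        (lucas (m+1) * (lucasFactD 2 m * lucasFactD 2 (j+1))) := by ring

/-- for n ≥ 3, k ≥ 1, the Lucas–Coxeter–Fuss–Catalan analogue of D_n,
({2k(n-1)+n}/{n}) Π_{i=1}^{n-1} {2k(n-1)+2i}/{2i}
  = ({(2k+1)n-2k}/{n}) {(k+1)(n-1):2 choose n-1:2},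
lies in ℕ[s,t]. -/
theorem coxeterFussCatalan_D (n k : ℕ) (hn : 3 ≤ n) (hk : 1 ≤ k) :
    (L (2*k*(n-1)+n) / L n) *
        (∏ i ∈ Finset.Icc 1 (n-1), L (2*k*(n-1)+2*i) / L (2*i)) =
      (L ((2*k+1)*n-2*k) / L n) * lnomD 2 ((k+1)*(n-1)) (n-1) ∧
    ∃ p : P2, Nonneg p ∧
      (L ((2*k+1)*n-2*k) / L n) * lnomD 2 ((k+1)*(n-1)) (n-1) = φ p := by
  obtain ⟨m, rfl⟩ : ∃ m, n = m + 1 := ⟨n - 1, by omega⟩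
  have hm : 2 ≤ m := by omega
  simp only [Nat.add_sub_cancel]
  have hkm : 2 ≤ k*m := by
    calc 2 ≤ m := hm
    _ = 1*m := (one_mul m).symm
    _ ≤ k*m := Nat.mul_le_mul_right m hk
  obtain ⟨j, hj⟩ : ∃ j, k*m = j+1 := ⟨k*m-1, by omega⟩
  have hkm2 : 2*k*m = 2*j+2 := by rw [mul_assoc, hj]; omega
  have g2 : (2*k+1)*(m+1) - 2*k = 2*j+m+3 := by
    have h : (2*k+1)*(m+1) = 2*(k*m)+2*k+m+1 := by ring
    rw [hj] at h; omega
  have g3 : (k+1)*m = m+j+1 := by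
    have h : (k+1)*m = k*m+m := by ring
    rw [hj] at h; omega
  simp only [hkm2, g2, g3, show 2*j+2+(m+1) = 2*j+m+3 from by omega]
  -- nonzero facts
  have hFne : ∀ a : ℕ, φ (lucasFactD 2 a) ≠ 0 := fun a => φ_ne_zero (factD_ne_zero a)
  have hLne : ∀ a : ℕ, φ (lucas (a+1)) ≠ 0 := fun a => φ_ne_zero (lucas_ne_zero a)
  -- the product over Icc
  have hprod : (∏ i ∈ Finset.Icc 1 m, L (2*j+2+2*i) / L (2*i))
      = φ (lucasFactD 2 (m+j+1)) / (φ (lucasFactD 2 m) * φ (lucasFactD 2 (j+1))) := by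
    rw [prod_Icc_eq, Finset.prod_div_distrib]
    have hden : (∏ i ∈ Finset.range m, L (2*(i+1))) = φ (lucasFactD 2 m) := by
      rw [lucasFactD, map_prod]
      rfl
    have hnum : (∏ i ∈ Finset.range m, L (2*j+2+2*(i+1)))
        = φ (lucasFactD 2 (m+j+1)) / φ (lucasFactD 2 (j+1)) := by
      have h := factD_add (j+1) m
      rw [show j+1+m = m+j+1 from by omega] at h
      rw [h, map_mul, map_prod]
      rw [mul_comm (φ (lucasFactD 2 (j+1))), mul_div_assoc, div_self (hFne (j+1)), mul_one]
      apply Finset.prod_congr rfl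
      intro i _
      rw [show 2*j+2+2*(i+1) = 2*(j+1+i+1) from by omega]
      rfl
    rw [hnum, hden, div_div, mul_comm (φ (lucasFactD 2 (j+1)))]
  have hlnom : lnomD 2 (m+j+1) m
      = φ (lucasFactD 2 (m+j+1)) / (φ (lucasFactD 2 m) * φ (lucasFactD 2 (j+1))) := by
    rw [lnomD, show m+j+1-m = j+1 from by omega]
    rfl
  constructor
  · rw [hprod, hlnom]
  · refine ⟨lucas (2*j+3) * lb m (j+1) + pt * lucas m * (lucas (m+2) + pt * lucas m) * lb (m+1) j,
      ?_, ?_⟩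
    · exact nn_add (nn_mul (nn_lucas _) (nn_lb _ _))
        (nn_mul (nn_mul (nn_mul nn_pt (nn_lucas _)) (nn_add (nn_lucas _) (nn_mul nn_pt (nn_lucas _)))) (nn_lb _ _))
    · rw [hlnom]
      have hLdef : ∀ a : ℕ, L a = φ (lucas a) := fun a => rfl
      have hLFdef : ∀ a : ℕ, LFactD 2 a = φ (lucasFactD 2 a) := fun a => rfl
      rw [hLdef, hLdef, div_mul_div_comm, ← map_mul, ← map_mul, ← map_mul]
      rw [div_eq_iff (φ_ne_zero (by
        exact mul_ne_zero (lucas_ne_zero m) (mul_ne_zero (factD_ne_zero m) (factD_ne_zero (j+1)))))]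
      rw [← map_mul]
      exact congrArg φ (master m j)
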